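/- Let n ≥ 2. There exists a full (n+2)-coloring Γ of the standard n-sphere S^n such that every (n−1)-sphere in S^n contains at most n + 1 colors; that is, for every affine hyperplane H of ℝ^{n+1} whose distance from the origin is strictly less than 1, the image Γ(S^n ∩ H) has at most n + 1 elements. -/

import Mathlib

open Finset



/-- index of the top nonzero coordinate (0 if none), among 0..n -/
noncomputable def jstar (n : ℕ) (y : ℕ → ℝ) : ℕ :=
  Nat.findGreatest (fun j => y j ≠ 0) n

/-- the coloring, as a natural number -/
noncomputable def col (n : ℕ) (y : ℕ → ℝ) : ℕ :=
  if jstar n y % 2 = n % 2 ∧ 1 ≤ jstar n y then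
    (if 0 ≤ y (jstar n y - 1) * y (jstar n y) then jstar n y else jstar n y + 1)
  else if jstar n y = 0 then (if n % 2 = 0 then (if 0 < y 0 then 0 else 1) else 0)
  else jstar n y + 1

lemma jstar_eq (n : ℕ) (y : ℕ → ℝ) (m : ℕ) (hm : m ≤ n) (h0 : y m ≠ 0)
    (hhi : ∀ j, m < j → y j = 0) : jstar n y = m := by
  unfold jstar
  refine le_antisymm ?_ (Nat.le_findGreatest hm h0)
  by_contra h
  push_neg at h
  have hs : y (Nat.findGreatest (fun j => y j ≠ 0) n) ≠ 0 :=
    Nat.findGreatest_spec (P := fun j => y j ≠ 0) hm h0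
  exact hs (hhi _ h)

lemma jstar_le (n : ℕ) (y : ℕ → ℝ) (k : ℕ) (h : ∀ j, k < j → y j = 0) :
    jstar n y ≤ k := by
  by_contra hc
  push_neg at hc
  have h0 : jstar n y ≠ 0 := by omega
  have hs : y (jstar n y) ≠ 0 :=
    Nat.findGreatest_of_ne_zero (P := fun j => y j ≠ 0) rfl h0
  exact hs (h _ hc)

lemma col_le_jstar (n : ℕ) (y : ℕ → ℝ) : col n y ≤ jstar n y + 1 := by
  unfold col
  split_ifs <;> omega

lemma col_le (n : ℕ) (y : ℕ → ℝ) (k : ℕ) (h : ∀ j, k < j → y j = 0) :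
    col n y ≤ k + 1 :=
  le_trans (col_le_jstar n y) (by have := jstar_le n y k h; omega)

lemma col_pair_top (n : ℕ) (y : ℕ → ℝ) (m : ℕ) (hm : m ≤ n) (hpar : m % 2 = n % 2)
    (h1 : 1 ≤ m) (h0 : y m ≠ 0) (hhi : ∀ j, m < j → y j = 0) :
    col n y = if 0 ≤ y (m - 1) * y m then m else m + 1 := by
  unfold col
  rw [jstar_eq n y m hm h0 hhi]
  simp [hpar, h1]

lemma col_pair_bot (n : ℕ) (y : ℕ → ℝ) (m : ℕ) (hm : m ≤ n) (hpar : ¬ m % 2 = n % 2)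
    (h1 : 1 ≤ m) (h0 : y m ≠ 0) (hhi : ∀ j, m < j → y j = 0) :
    col n y = m + 1 := by
  unfold col
  rw [jstar_eq n y m hm h0 hhi]
  have : ¬ (m % 2 = n % 2 ∧ 1 ≤ m) := by tauto
  rw [if_neg this, if_neg (by omega)]

lemma col_base (n : ℕ) (y : ℕ → ℝ) (hn : 0 < n) (h0 : y 0 ≠ 0)
    (hhi : ∀ j, 0 < j → y j = 0) :
    col n y = if n % 2 = 0 then (if 0 < y 0 then 0 else 1) else 0 := by
  unfold col
  rw [jstar_eq n y 0 (by omega) h0 hhi]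
  simp


lemma mySumCollapse {n k : ℕ} (hk : k ≤ n) (f : ℕ → ℝ) (h : ∀ j, k < j → f j = 0) :
    ∑ j ∈ Finset.range (n + 1), f j = ∑ j ∈ Finset.range (k + 1), f j := by
  refine (Finset.sum_subset (by intro x hx; simp only [Finset.mem_range] at *; omega) ?_).symm
  intro x hx hnx
  simp only [Finset.mem_range] at hx hnx
  exact h x (by omega)

/-- if the top pair (k+1, k+2) of y is not both zero, the color is k+2 or k+3 -/
lemma col_pair_cases (n k : ℕ) (hkn : k + 2 ≤ n) (hpar : (k + 2) % 2 = n % 2)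
    (y : ℕ → ℝ) (hsupp : ∀ j, k + 2 < j → y j = 0) (hp : ¬ (y (k+1) = 0 ∧ y (k+2) = 0)) :
    col n y = k + 2 ∨ col n y = k + 3 := by
  by_cases h2 : y (k + 2) = 0
  · have h1 : y (k + 1) ≠ 0 := by tauto
    left
    have := col_pair_bot n y (k+1) (by omega) (by omega) (by omega) h1
      (fun j hj => by rcases Nat.lt_or_ge (k+2) j with h | h
                      · exact hsupp j h
                      · have : j = k + 2 := by omega
                        rw [this]; exact h2)
    omega
  · have := col_pair_top n y (k+2) hkn hpar (by omega) h2 (fun j hj => hsupp j hj)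
    rw [this]
    split <;> omega

theorem key (n : ℕ) (hn : 2 ≤ n) : ∀ k, k ≤ n → k % 2 = n % 2 →
    ∀ (u : ℕ → ℝ) (t : ℝ), (∃ j, j ≤ k ∧ u j ≠ 0) →
    ∃ c, c ≤ k + 1 ∧ ∀ y : ℕ → ℝ,
      (∑ j ∈ Finset.range (n + 1), (y j) ^ 2 = 1) →
      (∀ j, k < j → y j = 0) →
      (∑ j ∈ Finset.range (k + 1), u j * y j = t) → col n y ≠ c := by
  intro k
  induction k using Nat.strong_induction_on with
  | _ k IH =>
  intro hkn hpar u t hu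
  match k, hkn, hpar, hu, IH with
  | 0, hkn, hpar, hu, IH =>
    obtain ⟨j, hj, hju⟩ := hu
    have hj0 : j = 0 := by omega
    subst hj0
    have hne : n % 2 = 0 := by omega
    have hu2 : (0:ℝ) < u 0 ^ 2 := by positivity
    refine ⟨if 0 < t * u 0 then 1 else 0, by split <;> omega, ?_⟩
    intro y hnorm hsupp hsum
    have hy2 : y 0 ^ 2 = 1 := by
      rw [mySumCollapse (k := 0) (by omega) _ (fun j hj => by rw [hsupp j hj]; ring)] at hnorm
      simpa using hnorm
    have hy0 : y 0 ≠ 0 := by intro h; rw [h] at hy2; norm_num at hy2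
    have hsum' : u 0 * y 0 = t := by simpa using hsum
    rw [col_base n y (by omega) hy0 hsupp, if_pos hne]
    have htu : t * u 0 = u 0 ^ 2 * y 0 := by rw [← hsum']; ring
    rcases lt_or_gt_of_ne hy0 with hneg | hpos
    · have h2 : ¬ (0 < t * u 0) := by
        rw [htu]; push_neg
        exact le_of_lt (mul_neg_of_pos_of_neg hu2 hneg)
      rw [if_neg h2, if_neg (by linarith : ¬ (0 < y 0))]
      exact one_ne_zero
    · have h2 : 0 < t * u 0 := by
        rw [htu]; exact mul_pos hu2 hpos
      rw [if_pos h2, if_pos hpos]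
      exact zero_ne_one
  | 1, hkn, hpar, hu, IH =>
    have hno : n % 2 = 1 := by omega
    set N := u 0 ^ 2 + u 1 ^ 2 with hN
    have hNpos : 0 < N := by
      obtain ⟨j, hj, hju⟩ := hu
      interval_cases j <;> positivity
    set s := Real.sqrt (N - t ^ 2) with hs
    set Y : ℝ → (ℕ → ℝ) := fun w j =>
      if j = 0 then (u 0 * t + u 1 * w) / N else if j = 1 then (u 1 * t - u 0 * w) / N else 0
      with hY
    set c₁ := col n (Y s) with hc₁
    set c₂ := col n (Y (-s)) with hc₂
    refine ⟨if c₁ = 0 ∨ c₂ = 0 then (if c₁ = 1 ∨ c₂ = 1 then 2 else 1) else 0,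
      by split_ifs <;> omega, ?_⟩
    intro y hnorm hsupp hsum
    have h01 : y 0 ^ 2 + y 1 ^ 2 = 1 := by
      rw [mySumCollapse (k := 1) (by omega) _ (fun j hj => by rw [hsupp j hj]; ring)] at hnorm
      rw [Finset.sum_range_succ, Finset.sum_range_one] at hnorm
      exact hnorm
    have hsum' : u 0 * y 0 + u 1 * y 1 = t := by
      rw [Finset.sum_range_succ, Finset.sum_range_one] at hsum
      exact hsum
    set w := u 1 * y 0 - u 0 * y 1 with hw
    have hw2 : w ^ 2 = N - t ^ 2 := by
      rw [hw, hN, ← hsum']; nlinarith [h01]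
    have hws : w = s ∨ w = -s := by
      have habs : |w| = s := by
        rw [hs, ← hw2]
        exact (Real.sqrt_sq_eq_abs w).symm
      rcases abs_cases w with ⟨h, _⟩ | ⟨h, _⟩
      · left; rw [← habs, h]
      · right; rw [← habs, h]; ring
    have hyY : y = Y w := by
      funext j
      rcases j with _ | j
      · show y 0 = (u 0 * t + u 1 * w) / N
        rw [eq_div_iff (ne_of_gt hNpos)]
        rw [hw, ← hsum', hN]; ring
      rcases j with _ | j
      · show y 1 = (u 1 * t - u 0 * w) / N
        rw [eq_div_iff (ne_of_gt hNpos)]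
        rw [hw, ← hsum', hN]; ring
      · show y (j + 2) = 0
        exact hsupp _ (by omega)
    rw [hyY]
    rcases hws with h | h <;> rw [h]
    · show c₁ ≠ _
      split_ifs <;> omega
    · show c₂ ≠ _
      split_ifs <;> omega
  | (k + 2), hkn, hpar, hu, IH =>
    have hpark : k % 2 = n % 2 := by omega
    by_cases hlow : ∃ j, j ≤ k ∧ u j ≠ 0
    · -- Case C : recurse
      obtain ⟨c, hc, hprop⟩ := IH k (by omega) (by omega) hpark u t hlow
      refine ⟨c, by omega, ?_⟩
      intro y hnorm hsupp hsum
      by_cases hp : y (k+1) = 0 ∧ y (k+2) = 0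
      · refine hprop y hnorm (fun j hj => ?_) ?_
        · rcases Nat.lt_or_ge (k+2) j with h | h
          · exact hsupp j h
          · rcases Nat.lt_or_ge (k+1) j with h' | h'
            · have : j = k + 2 := by omega
              rw [this]; exact hp.2
            · have : j = k + 1 := by omega
              rw [this]; exact hp.1
        · rw [Finset.sum_range_succ, Finset.sum_range_succ] at hsum
          rw [hp.1, hp.2] at hsum
          linarith [hsum]
      · rcases col_pair_cases n k hkn hpar y hsupp hp with h | h <;> omega
    · push_neg at hlow
      have hu12 : u (k+1) ≠ 0 ∨ u (k+2) ≠ 0 := by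
        obtain ⟨j, hj, hju⟩ := hu
        rcases Nat.lt_or_ge k j with h | h
        · rcases Nat.lt_or_ge (k+1) j with h' | h'
          · right; have : j = k + 2 := by omega
            rwa [this] at hju
          · left; have : j = k + 1 := by omega
            rwa [this] at hju
        · exact absurd (hlow j h) hju
      have hsum_red : ∀ y : ℕ → ℝ, (∑ j ∈ Finset.range (k + 3), u j * y j)
          = u (k+1) * y (k+1) + u (k+2) * y (k+2) := by
        intro y
        rw [Finset.sum_range_succ, Finset.sum_range_succ,
          Finset.sum_eq_zero (fun j hj => by
            rw [hlow j (by simpa [Nat.lt_succ_iff] using hj)]; ring)]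
        ring
      by_cases ht : t = 0
      · subst ht
        by_cases hsgn : u (k+1) * u (k+2) ≤ 0
        · -- missing color k+3
          refine ⟨k + 3, by omega, ?_⟩
          intro y hnorm hsupp hsum
          rw [hsum_red] at hsum
          by_cases h2 : y (k+2) = 0
          · by_cases h1 : y (k+1) = 0
            · have := col_le n y k (fun j hj => by
                rcases Nat.lt_or_ge (k+2) j with h | h
                · exact hsupp j h
                · rcases Nat.lt_or_ge (k+1) j with h' | h'
                  · have : j = k + 2 := by omega
                    rw [this]; exact h2
                  · have : j = k + 1 := by omega
                    rw [this]; exact h1)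
              omega
            · have := col_pair_bot n y (k+1) (by omega) (by omega) (by omega) h1
                (fun j hj => by rcases Nat.lt_or_ge (k+2) j with h | h
                                · exact hsupp j h
                                · have : j = k + 2 := by omega
                                  rw [this]; exact h2)
              omega
          · -- y(k+2) ≠ 0 : product nonneg, color = k+2
            have ha : u (k+1) ≠ 0 := by
              intro h
              rcases hu12 with h' | h'
              · exact h' h
              · rw [h] at hsum; simp at hsum
                rcases hsum with h'' | h''
                · exact h' h''
                · exact h2 h''
            have hprod : 0 ≤ y (k+1) * y (k+2) := by
              have key : u (k+1) ^ 2 * (y (k+1) * y (k+2)) =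
                  -(u (k+1) * u (k+2)) * y (k+2) ^ 2 := by
                linear_combination (u (k+1) * y (k+2)) * hsum
              nlinarith [sq_nonneg (y (k+2)), sq_nonneg (u (k+1)),
                (by positivity : (0:ℝ) < u (k+1) ^ 2)]
            have := col_pair_top n y (k+2) hkn hpar (by omega) h2 hsupp
            rw [this]
            have hm : (k + 2) - 1 = k + 1 := by omega
            rw [hm, if_pos hprod]
            omega
        · push_neg at hsgn
          have ha : u (k+1) ≠ 0 := fun h => by rw [h] at hsgn; simp at hsgn
          refine ⟨k + 2, by omega, ?_⟩
          intro y hnorm hsupp hsum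
          rw [hsum_red] at hsum
          by_cases h2 : y (k+2) = 0
          · have h1 : y (k+1) = 0 := by
              rw [h2] at hsum
              have : u (k+1) * y (k+1) = 0 := by linarith
              rcases mul_eq_zero.mp this with h | h
              · exact absurd h ha
              · exact h
            have := col_le n y k (fun j hj => by
                rcases Nat.lt_or_ge (k+2) j with h | h
                · exact hsupp j h
                · rcases Nat.lt_or_ge (k+1) j with h' | h'
                  · have : j = k + 2 := by omega
                    rw [this]; exact h2
                  · have : j = k + 1 := by omega
                    rw [this]; exact h1)
            omega
          · have hprod : ¬ (0 ≤ y (k+1) * y (k+2)) := by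
              have key : u (k+1) ^ 2 * (y (k+1) * y (k+2)) =
                  -(u (k+1) * u (k+2)) * y (k+2) ^ 2 := by
                linear_combination (u (k+1) * y (k+2)) * hsum
              intro hcon
              nlinarith [(by positivity : (0:ℝ) < u (k+1) ^ 2),
                (by positivity : (0:ℝ) < y (k+2) ^ 2)]
            have := col_pair_top n y (k+2) hkn hpar (by omega) h2 hsupp
            rw [this]
            have hm : (k + 2) - 1 = k + 1 := by omega
            rw [hm, if_neg hprod]
            omega
      · -- t ≠ 0 : missing color 0
        refine ⟨0, by omega, ?_⟩
        intro y hnorm hsupp hsum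
        rw [hsum_red] at hsum
        have hp : ¬ (y (k+1) = 0 ∧ y (k+2) = 0) := by
          rintro ⟨h1, h2⟩
          rw [h1, h2] at hsum
          simp at hsum
          exact ht hsum.symm
        rcases col_pair_cases n k hkn hpar y hsupp hp with h | h <;> omega


noncomputable def extc (n : ℕ) (x : EuclideanSpace ℝ (Fin (n + 1))) : ℕ → ℝ :=
  fun j => if h : j < n + 1 then x ⟨j, h⟩ else 0

lemma extc_single (n : ℕ) (i : Fin (n + 1)) (a : ℝ) (j : ℕ) :
    extc n (EuclideanSpace.single i a) j = if j = i.val then a else 0 := by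
  unfold extc
  by_cases h : j < n + 1
  · rw [dif_pos h, EuclideanSpace.single_apply]
    simp [Fin.ext_iff]
  · rw [dif_neg h, if_neg (by have := i.isLt; omega)]

lemma extc_add (n : ℕ) (x y : EuclideanSpace ℝ (Fin (n + 1))) (j : ℕ) :
    extc n (x + y) j = extc n x j + extc n y j := by
  unfold extc
  by_cases h : j < n + 1
  · rw [dif_pos h, dif_pos h, dif_pos h]
    rfl
  · rw [dif_neg h, dif_neg h, dif_neg h]; ring

lemma norm_one_of_sq (E : Type*) [NormedAddCommGroup E] (x : E) (h : ‖x‖ ^ 2 = 1) :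
    ‖x‖ = 1 := by
  have := Real.sqrt_sq (norm_nonneg x)
  rw [← this, h, Real.sqrt_one]

theorem surj (n : ℕ) (hn : 2 ≤ n) (c : Fin (n + 2)) :
    ∃ p : (Metric.sphere (0 : EuclideanSpace ℝ (Fin (n + 1))) 1),
      col n (extc n p.val) = c.val := by
  set m := c.val with hm
  have hmle : m ≤ n + 1 := by omega
  rcases Nat.lt_or_ge m 1 with h0 | h1
  · -- m = 0
    have hm0 : m = 0 := by omega
    refine ⟨⟨EuclideanSpace.single (⟨0, by omega⟩ : Fin (n + 1)) (1 : ℝ), by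
      rw [mem_sphere_zero_iff_norm, EuclideanSpace.norm_single]; norm_num⟩, ?_⟩
    rw [hm0]
    rw [col_base n _ (by omega) (by rw [extc_single]; norm_num)
      (fun j hj => by rw [extc_single]; simp; omega)]
    rw [extc_single]
    norm_num
  · by_cases hpar : m % 2 = n % 2
    · -- m ≥ 1, parity matches: single basis vector at m
      have hmn : m ≤ n := by omega
      set x : EuclideanSpace ℝ (Fin (n + 1)) :=
        EuclideanSpace.single (⟨m, by omega⟩ : Fin (n + 1)) (1 : ℝ) with hxdef
      have hco : ∀ j, extc n x j = if j = m then 1 else 0 := fun j => extc_single n _ _ j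
      have e1 : extc n x m = 1 := by rw [hco]; simp
      have e0 : extc n x (m - 1) = 0 := by rw [hco]; rw [if_neg (by omega)]
      refine ⟨⟨x, by
        rw [mem_sphere_zero_iff_norm, hxdef, EuclideanSpace.norm_single]; norm_num⟩, ?_⟩
      rw [col_pair_top n _ m hmn hpar h1 (by rw [e1]; norm_num)
        (fun j hj => by rw [hco]; rw [if_neg (by omega)])]
      rw [e1, e0, if_pos (by norm_num)]
    · rcases Nat.lt_or_ge m 2 with hm1 | hm2
      · -- m = 1 and n even
        have hm1' : m = 1 := by omega
        have hne : n % 2 = 0 := by omega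
        refine ⟨⟨EuclideanSpace.single (⟨0, by omega⟩ : Fin (n + 1)) (-1 : ℝ), by
          rw [mem_sphere_zero_iff_norm, EuclideanSpace.norm_single]; norm_num⟩, ?_⟩
        rw [col_base n _ (by omega) (by rw [extc_single]; norm_num)
          (fun j hj => by rw [extc_single]; simp; omega)]
        rw [extc_single, if_pos rfl, if_pos hne, if_neg (by norm_num)]
        omega
      · -- m ≥ 2, parity mismatch: two-coordinate point
        set r := Real.sqrt (1 / 2) with hr
        have hrpos : 0 < r := Real.sqrt_pos.mpr (by norm_num)
        have hr2 : r ^ 2 = 1 / 2 := Real.sq_sqrt (by norm_num)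
        have hm2n : m - 1 ≤ n := by omega
        set i₁ : Fin (n + 1) := ⟨m - 2, by omega⟩ with hi₁
        set i₂ : Fin (n + 1) := ⟨m - 1, by omega⟩ with hi₂
        set x : EuclideanSpace ℝ (Fin (n + 1)) :=
          EuclideanSpace.single i₁ r + EuclideanSpace.single i₂ (-r) with hx
        have hne12 : i₁ ≠ i₂ := by
          simp only [hi₁, hi₂, Fin.mk.injEq, ne_eq]
          omega
        have hinner : (inner ℝ (EuclideanSpace.single i₁ r)
            (EuclideanSpace.single i₂ (-r)) : ℝ) = 0 := by
          rw [EuclideanSpace.inner_single_left]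
          rw [EuclideanSpace.single_apply, if_neg hne12]
          simp
        have hnorm : ‖x‖ = 1 := by
          apply norm_one_of_sq
          rw [hx, norm_add_sq_real, hinner]
          rw [EuclideanSpace.norm_single, EuclideanSpace.norm_single]
          rw [Real.norm_eq_abs, Real.norm_eq_abs, abs_of_pos hrpos, abs_of_neg (by linarith)]
          nlinarith [hr2]
        have hcoord : ∀ j, extc n x j =
            if j = m - 2 then r else if j = m - 1 then -r else 0 := by
          intro j
          rw [hx, extc_add, extc_single, extc_single]
          have v1 : (i₁ : ℕ) = m - 2 := rfl
          have v2 : (i₂ : ℕ) = m - 1 := rfl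
          rw [v1, v2]
          split_ifs <;> (first | ring1 | (exfalso; omega))
        refine ⟨⟨x, by rw [mem_sphere_zero_iff_norm]; exact hnorm⟩, ?_⟩
        have e1 : extc n x (m - 1 - 1) = r := by
          rw [hcoord]; rw [if_pos (by omega)]
        have e2 : extc n x (m - 1) = -r := by
          rw [hcoord]; rw [if_neg (by omega), if_pos rfl]
        rw [col_pair_top n _ (m - 1) hm2n (by omega) (by omega)
          (by rw [e2]; intro hcon; rw [neg_eq_zero] at hcon; linarith)
          (fun j hj => by rw [hcoord]; rw [if_neg (by omega), if_neg (by omega)])]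
        rw [e1, e2, if_neg (by nlinarith)]
        omega



lemma extc_supp (n : ℕ) (x : EuclideanSpace ℝ (Fin (n + 1))) :
    ∀ j, n < j → extc n x j = 0 := by
  intro j hj
  unfold extc
  rw [dif_neg (by omega)]

lemma extc_apply (n : ℕ) (x : EuclideanSpace ℝ (Fin (n + 1))) (i : Fin (n + 1)) :
    extc n x i.val = x i := by
  unfold extc
  rw [dif_pos i.isLt]

lemma sum_ext (n : ℕ) (x y : EuclideanSpace ℝ (Fin (n + 1))) :
    ∑ j ∈ Finset.range (n + 1), extc n x j * extc n y j = ∑ i : Fin (n + 1), x i * y i := by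
  rw [← Fin.sum_univ_eq_sum_range (fun j => extc n x j * extc n y j) (n + 1)]
  exact Finset.sum_congr rfl (fun i _ => by rw [extc_apply, extc_apply])

lemma sum_ext_sq (n : ℕ) (x : EuclideanSpace ℝ (Fin (n + 1))) :
    ∑ j ∈ Finset.range (n + 1), (extc n x j) ^ 2 = ∑ i : Fin (n + 1), (x i) ^ 2 := by
  rw [← Fin.sum_univ_eq_sum_range (fun j => (extc n x j) ^ 2) (n + 1)]
  exact Finset.sum_congr rfl (fun i _ => by rw [extc_apply])

lemma norm_sum_sq (n : ℕ) (x : EuclideanSpace ℝ (Fin (n + 1))) (h : ‖x‖ = 1) :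
    ∑ j ∈ Finset.range (n + 1), (extc n x j) ^ 2 = 1 := by
  rw [sum_ext_sq]
  have := EuclideanSpace.norm_eq x
  rw [h] at this
  have h2 : (∑ i, ‖x i‖ ^ 2) = 1 := Real.sqrt_eq_one.mp this.symm
  rw [← h2]
  exact Finset.sum_congr rfl (fun i _ => by rw [Real.norm_eq_abs, sq_abs])

lemma inner_euclidean (n : ℕ) (u v : EuclideanSpace ℝ (Fin (n + 1))) :
    (inner ℝ u v : ℝ) = ∑ i : Fin (n + 1), u i * v i := by
  simp [PiLp.inner_apply, RCLike.inner_apply, starRingEnd_apply, mul_comm]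

/-- Sharpness: for `n ≥ 2` there is a full `(n+2)`-coloring of the standard `n`-sphere in
which every `(n-1)`-sphere contains at most `n + 1` colors. -/
theorem sharp_n_plus_two_coloring (n : ℕ) (hn : 2 ≤ n) :
    ∃ Γ : (Metric.sphere (0 : EuclideanSpace ℝ (Fin (n + 1))) 1) → Fin (n + 2),
      Function.Surjective Γ ∧
      ∀ H : AffineSubspace ℝ (EuclideanSpace ℝ (Fin (n + 1))),
        Module.finrank ℝ H.direction = n → (∃ x ∈ H, ‖x‖ < 1) →
        (Γ '' {p | (p : EuclideanSpace ℝ (Fin (n + 1))) ∈ H}).ncard ≤ n + 1 := by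
  refine ⟨fun p => ⟨col n (extc n p.val), by
    have := col_le n (extc n p.val) n (extc_supp n p.val); omega⟩, ?_, ?_⟩
  · -- surjectivity
    intro c
    obtain ⟨p, hp⟩ := surj n hn c
    exact ⟨p, Fin.ext hp⟩
  · intro H hH hx
    obtain ⟨x₀, hx₀H, _⟩ := hx
    have hfr : Module.finrank ℝ (EuclideanSpace ℝ (Fin (n + 1))) = n + 1 :=
      finrank_euclideanSpace_fin
    have hd : H.direction ≠ ⊤ := by
      intro h
      rw [h, finrank_top] at hH
      omega
    have hob : H.directionᗮ ≠ ⊥ := by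
      rwa [Ne, Submodule.orthogonal_eq_bot_iff]
    obtain ⟨u, huo, hune⟩ := Submodule.exists_mem_ne_zero_of_ne_bot hob
    have huex : ∃ j, j ≤ n ∧ extc n u j ≠ 0 := by
      by_contra hcon
      push_neg at hcon
      apply hune
      ext i
      have := hcon i.val (by omega)
      rw [extc_apply] at this
      simpa using this
    obtain ⟨c, hc, hmiss⟩ := key n hn n le_rfl rfl (extc n u) (inner ℝ u x₀) huex
    have hsub : (fun p : (Metric.sphere (0 : EuclideanSpace ℝ (Fin (n + 1))) 1) =>
        (⟨col n (extc n p.val), by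
          have := col_le n (extc n p.val) n (extc_supp n p.val); omega⟩ : Fin (n+2))) ''
        {p | (p : EuclideanSpace ℝ (Fin (n + 1))) ∈ H}
        ⊆ Set.univ \ {(⟨c, by omega⟩ : Fin (n + 2))} := by
      rintro _ ⟨p, hp, rfl⟩
      refine ⟨Set.mem_univ _, ?_⟩
      simp only [Set.mem_singleton_iff]
      intro hceq
      have hcol : col n (extc n p.val) = c := congrArg Fin.val hceq
      have hpn : ‖(p : EuclideanSpace ℝ (Fin (n + 1)))‖ = 1 := by
        have := p.2
        rwa [mem_sphere_zero_iff_norm] at this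
      have hinner : (inner ℝ u (p : EuclideanSpace ℝ (Fin (n + 1))) : ℝ) = inner ℝ u x₀ := by
        have hv : (p : EuclideanSpace ℝ (Fin (n + 1))) -ᵥ x₀ ∈ H.direction :=
          AffineSubspace.vsub_mem_direction hp hx₀H
        have h0 : (inner ℝ ((p : EuclideanSpace ℝ (Fin (n + 1))) - x₀) u : ℝ) = 0 :=
          huo _ hv
        have hcomm := real_inner_comm ((p : EuclideanSpace ℝ (Fin (n + 1))) - x₀) u
        rw [← hcomm, inner_sub_right] at h0
        linarith
      exact hmiss (extc n p.val) (norm_sum_sq n _ hpn) (extc_supp n _)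
        (by rw [sum_ext, ← inner_euclidean, hinner]) hcol
    calc _ ≤ (Set.univ \ {(⟨c, by omega⟩ : Fin (n + 2))}).ncard :=
        Set.ncard_le_ncard hsub (Set.toFinite _)
      _ = n + 1 := by
        rw [Set.ncard_diff_singleton_of_mem (Set.mem_univ _), Set.ncard_univ,
          Nat.card_eq_fintype_card, Fintype.card_fin]
        omega
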